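/- Let f: ℕ → [0, ∞) be nondecreasing (f(N−1) ≤ f(N)) and suppose for all N ≤ 2N' the abstract Hölder estimate f(N) ≤ f(N') + p^{(p-1)/p} f(N)^{(p−1)/p} · p^{1/p} f(N')^{1/p} holds for some fixed p > 1. Then there is a constant C = C(p) with f(N) ≤ C f(N') whenever N ≤ 2N'. -/

import Mathlib

/-- Doubling estimate: if `f` is nonnegative, nondecreasing, and satisfies the abstract
Hölder estimate `f(N) ≤ f(N') + p^{(p-1)/p} f(N)^{(p−1)/p} p^{1/p} f(N')^{1/p}`
whenever `N ≤ 2N'`, then `f(N) ≤ C f(N')` whenever `N ≤ 2N'`, with `C = C(p)`. -/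
theorem doubling_estimate (p : ℝ) (hp : 1 < p) :
    ∃ C : ℝ, 0 < C ∧
      ∀ f : ℕ → ℝ, (∀ N, 0 ≤ f N) → (∀ N : ℕ, 1 ≤ N → f (N - 1) ≤ f N) →
        (∀ N N' : ℕ, N ≤ 2 * N' →
          f N ≤ f N' + p ^ ((p - 1) / p) * f N ^ ((p - 1) / p) * (p ^ (1 / p) * f N' ^ (1 / p))) →
        ∀ N N' : ℕ, N ≤ 2 * N' → f N ≤ C * f N' := by
  have hp0 : (0:ℝ) < p := lt_trans one_pos hp
  have hp1 : p - 1 ≠ 0 := sub_ne_zero.mpr (ne_of_gt hp)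
  refine ⟨p + p ^ p, by positivity, ?_⟩
  intro f hf0 _ hH N N' hNN'
  have h := hH N N' hNN'
  set a := f N with ha
  set b := f N' with hb
  -- rewrite the cross term
  have hpp : p ^ ((p - 1) / p) * p ^ (1 / p) = p := by
    rw [← Real.rpow_add hp0]
    have : (p - 1) / p + 1 / p = 1 := by field_simp; ring
    rw [this, Real.rpow_one]
  have hcross : p ^ ((p - 1) / p) * a ^ ((p - 1) / p) * (p ^ (1 / p) * b ^ (1 / p))
      = a ^ ((p - 1) / p) * (p * b ^ (1 / p)) := by
    rw [show p ^ ((p - 1) / p) * a ^ ((p - 1) / p) * (p ^ (1 / p) * b ^ (1 / p))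
      = p ^ ((p - 1) / p) * p ^ (1 / p) * (a ^ ((p - 1) / p) * b ^ (1 / p)) by ring, hpp]
    ring
  rw [hcross] at h
  -- Young's inequality
  have hpq : (p / (p - 1)).HolderConjugate p :=
    (Real.HolderConjugate.conjExponent hp).symm
  have hy := Real.young_inequality_of_nonneg (a := a ^ ((p - 1) / p)) (b := p * b ^ (1 / p))
    (Real.rpow_nonneg (hf0 N) _) (mul_nonneg hp0.le (Real.rpow_nonneg (hf0 N') _)) hpq
  have h1 : (a ^ ((p - 1) / p)) ^ (p / (p - 1)) = a := by
    rw [← Real.rpow_mul (hf0 N),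
      show (p - 1) / p * (p / (p - 1)) = 1 by field_simp, Real.rpow_one]
  have h2 : (p * b ^ (1 / p)) ^ p = p ^ p * b := by
    rw [Real.mul_rpow (le_of_lt hp0) (Real.rpow_nonneg (hf0 N') _),
      ← Real.rpow_mul (hf0 N'), show 1 / p * p = 1 by field_simp, Real.rpow_one]
  rw [h1, h2] at hy
  -- combine
  have hq : a / (p / (p - 1)) = a * (p - 1) / p := by field_simp
  rw [hq] at hy
  have := le_trans h (by linarith : b + a ^ ((p - 1) / p) * (p * b ^ (1 / p)) ≤
      b + (a * (p - 1) / p + p ^ p * b / p))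
  have h3 : a * p ≤ (b + (a * (p - 1) / p + p ^ p * b / p)) * p :=
    mul_le_mul_of_nonneg_right this hp0.le
  have h4 : (b + (a * (p - 1) / p + p ^ p * b / p)) * p = b * p + a * (p - 1) + p ^ p * b := by
    field_simp; ring
  rw [h4] at h3
  nlinarith [h3]
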